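/- There exists an absolute constant C > 0 with the following property. Let A = (a_{ij}) be a 2×2 integer matrix with gcd(a₁₁,a₂₁,a₁₂,a₂₂) = 1 and determinant Δ = det(A) ≠ 0, and let f(x,y) = xᵀAy be the associated bilinear form. Then for all real numbers X₁,X₂,Y₁,Y₂ ≥ 1, the number N of pairs (x,y) ∈ ℤ²×ℤ² with |x_i| ≤ X_i, |y_i| ≤ Y_i, gcd(x₁,x₂) = gcd(y₁,y₂) = 1 and f(x,y) = 0 satisfies N ≤ C · min{ X₁X₂, Y₁Y₂, d(|Δ|)·(√(X₁X₂Y₁Y₂/|Δ|) + 1) }, where d(n) denotes the number of positive divisors of n. -/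

import Mathlib

set_option maxHeartbeats 3200000

private lemma perp_eq {a b v1 v2 : ℤ} (h1 : Int.gcd a b = 1) (h : v1 * a + v2 * b = 0) :
    ∃ l : ℤ, v1 = l * b ∧ v2 = -(l * a) := by
  obtain ⟨s, t, hst⟩ := Int.isCoprime_iff_gcd_eq_one.mpr h1
  refine ⟨t * v1 - s * v2, ?_, ?_⟩
  · linear_combination -v1 * hst + s * h
  · linear_combination -v2 * hst + t * h

private lemma prop_of_det_zero {y1 y2 z1 z2 : ℤ} (h1 : Int.gcd y1 y2 = 1)
    (h2 : Int.gcd z1 z2 = 1) (hd : y1 * z2 - y2 * z1 = 0) :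
    (z1 = y1 ∧ z2 = y2) ∨ (z1 = -y1 ∧ z2 = -y2) := by
  have hg : Int.gcd y2 (-y1) = 1 := by
    rw [Int.gcd] at *; simpa [Int.natAbs_neg, Nat.gcd_comm] using h1
  obtain ⟨l, hl1, hl2⟩ := perp_eq hg (v1 := z1) (v2 := z2) (by linear_combination -hd)
  have hz1 : z1 = (-l) * y1 := by linarith
  have hz2 : z2 = (-l) * y2 := by linarith
  have : Int.gcd ((-l) * y1) ((-l) * y2) = 1 := by rw [← hz1, ← hz2]; exact h2
  rw [Int.gcd_mul_left, h1, mul_one] at this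
  rcases Int.natAbs_eq_iff.mp this with h | h
  · left; constructor <;> [rw [hz1, h]; rw [hz2, h]] <;> ring
  · right; constructor <;> [rw [hz1, h]; rw [hz2, h]] <;> ring

private def normv (w : ℤ × ℤ) : ℤ × ℤ :=
  if 0 < w.1 ∨ (w.1 = 0 ∧ 0 < w.2) then w else (-w.1, -w.2)

private lemma normv_eq_or (w : ℤ × ℤ) : normv w = w ∨ normv w = (-w.1, -w.2) := by
  unfold normv; split <;> simp

private lemma normv_pos {w : ℤ × ℤ} (h : ¬(w.1 = 0 ∧ w.2 = 0)) :
    0 < (normv w).1 ∨ ((normv w).1 = 0 ∧ 0 < (normv w).2) := by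
  unfold normv; split
  · assumption
  · rename_i hc; push_neg at hc; simp only []; omega

private lemma normv_neg {w : ℤ × ℤ} (h : ¬(w.1 = 0 ∧ w.2 = 0)) :
    normv (-w.1, -w.2) = normv w := by
  rcases w with ⟨p, q⟩
  simp only [normv] at h ⊢
  split_ifs with h1 h2 h2
  · exfalso; omega
  · rfl
  · simp
  · exfalso; omega

private lemma floor_ne' {x y : ℝ} (h : 1 ≤ |x - y|) : ⌊x⌋ ≠ ⌊y⌋ := by
  intro he
  have h1 := Int.floor_le x
  have h2 := Int.lt_floor_add_one x
  have h3 := Int.floor_le y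
  have h4 := Int.lt_floor_add_one y
  rw [he] at h1 h2
  rcases abs_cases (x - y) with ⟨he1, _⟩ | ⟨he1, _⟩ <;> linarith

private lemma sep_card' {α : Type*} (s : Finset α) (f : α → ℝ) (δ : ℝ) (hδ : 0 < δ)
    (hr : ∀ a ∈ s, |f a| ≤ 1)
    (hs : ∀ a ∈ s, ∀ b ∈ s, a ≠ b → δ ≤ |f a - f b|) :
    (s.card : ℝ) ≤ 2 / δ + 1 := by
  have h2δ : (0:ℤ) ≤ ⌊2/δ⌋ := Int.floor_nonneg.mpr (by positivity)
  have hcard : s.card ≤ (Finset.Icc (0 : ℤ) ⌊2/δ⌋).card := by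
    apply Finset.card_le_card_of_injOn (fun a => ⌊(f a + 1) / δ⌋)
    · intro a ha
      have h1 := abs_le.mp (hr a ha)
      rw [Finset.mem_coe, Finset.mem_Icc]
      refine ⟨Int.floor_nonneg.mpr (div_nonneg (by linarith) hδ.le), ?_⟩
      exact Int.floor_le_floor (div_le_div_of_nonneg_right (by linarith) hδ.le)
    · intro a ha b hb heq
      by_contra hab
      refine floor_ne' ?_ heq
      have h0 : (f a + 1) / δ - (f b + 1) / δ = (f a - f b) / δ := by ring
      rw [h0, abs_div, abs_of_pos hδ]
      exact (one_le_div hδ).mpr (hs a ha b hb hab)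
  have hfin : ((Finset.Icc (0 : ℤ) ⌊2/δ⌋).card : ℝ) ≤ 2 / δ + 1 := by
    rw [Int.card_Icc]
    have h1 : ((⌊2/δ⌋ + 1 - 0).toNat : ℤ) = ⌊2/δ⌋ + 1 := by
      rw [Int.toNat_of_nonneg (by omega)]; ring
    rw [show (((⌊2/δ⌋ + 1 - 0).toNat : ℕ) : ℝ) = ((((⌊2/δ⌋ + 1 - 0).toNat : ℤ)) : ℝ) by push_cast; ring,
      h1]
    push_cast
    have := Int.floor_le (2/δ)
    linarith
  calc (s.card : ℝ) ≤ _ := by exact_mod_cast hcard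
    _ ≤ _ := hfin

private lemma count_lemma (T : Finset (ℤ × ℤ)) (X₁ X₂ m : ℝ) (hX₁ : 1 ≤ X₁) (hX₂ : 1 ≤ X₂)
    (hm : 0 < m)
    (hbox : ∀ v ∈ T, ((|v.1| : ℤ) : ℝ) ≤ X₁ ∧ ((|v.2| : ℤ) : ℝ) ≤ X₂)
    (hpos : ∀ v ∈ T, 0 < v.1 ∨ (v.1 = 0 ∧ 0 < v.2))
    (hsep : ∀ v ∈ T, ∀ w ∈ T, v ≠ w → m ≤ |((v.1 * w.2 - v.2 * w.1 : ℤ) : ℝ)|) :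
    (T.card : ℝ) ≤ 4 * X₁ * X₂ / m + 2 := by
  classical
  have hX₁0 : (0:ℝ) < X₁ := by linarith
  have hX₂0 : (0:ℝ) < X₂ := by linarith
  set δ : ℝ := m / (X₁ * X₂) with hδdef
  have hδ : 0 < δ := by positivity
  set P : ℤ × ℤ → Prop := fun v => ((|v.2| : ℤ) : ℝ) * X₁ ≤ ((|v.1| : ℤ) : ℝ) * X₂ with hP
  have hsplit := Finset.card_filter_add_card_filter_not (s := T) P
  -- Part A
  have hA : ((T.filter P).card : ℝ) ≤ 2 / δ + 1 := by
    apply sep_card' _ (fun v => ((v.2 : ℝ) * X₁) / ((v.1 : ℝ) * X₂)) δ hδ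
    · intro a ha
      rw [Finset.mem_filter] at ha
      obtain ⟨haT, haP⟩ := ha
      have ha1 : 0 < a.1 := by
        rcases hpos a haT with h | ⟨h1, h2⟩
        · exact h
        · exfalso
          rw [hP] at haP
          simp only [h1] at haP
          simp at haP
          have hpos2 : (0:ℝ) < |(a.2:ℝ)| := abs_pos.mpr (by exact_mod_cast h2.ne')
          nlinarith [mul_pos hpos2 hX₁0]
      have ha1R : (0:ℝ) < (a.1 : ℝ) := by exact_mod_cast ha1
      rw [abs_div, abs_mul, abs_mul, abs_of_pos hX₁0, abs_of_pos hX₂0, abs_of_pos ha1R]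
      rw [div_le_one (by positivity)]
      have : |(a.2 : ℝ)| = ((|a.2| : ℤ) : ℝ) := by push_cast; ring
      rw [this]
      have h2 : (a.1 : ℝ) = ((|a.1| : ℤ) : ℝ) := by
        rw [abs_of_pos ha1]
      rw [h2]; exact haP
    · intro a ha b hb hab
      rw [Finset.mem_filter] at ha hb
      obtain ⟨haT, haP⟩ := ha
      obtain ⟨hbT, hbP⟩ := hb
      have ha1 : 0 < a.1 := by
        rcases hpos a haT with h | ⟨h1, h2⟩
        · exact h
        · exfalso; rw [hP] at haP; simp only [h1] at haP; simp at haP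
          have hpos2 : (0:ℝ) < |(a.2:ℝ)| := abs_pos.mpr (by exact_mod_cast h2.ne')
          nlinarith [mul_pos hpos2 hX₁0]
      have hb1 : 0 < b.1 := by
        rcases hpos b hbT with h | ⟨h1, h2⟩
        · exact h
        · exfalso; rw [hP] at hbP; simp only [h1] at hbP; simp at hbP
          have hpos2 : (0:ℝ) < |(b.2:ℝ)| := abs_pos.mpr (by exact_mod_cast h2.ne')
          nlinarith [mul_pos hpos2 hX₁0]
      have ha1R : (0:ℝ) < (a.1 : ℝ) := by exact_mod_cast ha1
      have hb1R : (0:ℝ) < (b.1 : ℝ) := by exact_mod_cast hb1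
      have key : ((a.2 : ℝ) * X₁) / ((a.1 : ℝ) * X₂) - ((b.2 : ℝ) * X₁) / ((b.1 : ℝ) * X₂)
          = (X₁ * ((a.2 : ℝ) * (b.1:ℝ) - (a.1:ℝ) * (b.2:ℝ))) / ((a.1 : ℝ) * (b.1 : ℝ) * X₂) := by
        field_simp
      rw [key, abs_div, abs_mul, abs_of_pos hX₁0, abs_of_pos (by positivity : (0:ℝ) < (a.1:ℝ) * (b.1:ℝ) * X₂)]
      have hd := hsep a haT b hbT hab
      have hd' : m ≤ |(a.2 : ℝ) * (b.1:ℝ) - (a.1:ℝ) * (b.2:ℝ)| := by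
        have : |(a.2 : ℝ) * (b.1:ℝ) - (a.1:ℝ) * (b.2:ℝ)| = |((a.1 * b.2 - a.2 * b.1 : ℤ) : ℝ)| := by
          push_cast
          rw [abs_sub_comm]
        rw [this]; exact hd
      rw [hδdef, div_le_div_iff₀ (by positivity) (by positivity)]
      have haX : (a.1 : ℝ) ≤ X₁ := by
        have := (hbox a haT).1
        have h3 : ((a.1 : ℤ) : ℝ) ≤ ((|a.1| : ℤ) : ℝ) := by exact_mod_cast le_abs_self a.1
        linarith
      have hbX : (b.1 : ℝ) ≤ X₁ := by
        have := (hbox b hbT).1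
        have h3 : ((b.1 : ℤ) : ℝ) ≤ ((|b.1| : ℤ) : ℝ) := by exact_mod_cast le_abs_self b.1
        linarith
      have h1 : (a.1:ℝ) * (b.1:ℝ) ≤ X₁ * X₁ := mul_le_mul haX hbX hb1R.le (by linarith)
      have s1 : m * ((a.1:ℝ) * (b.1:ℝ) * X₂) ≤ |(a.2 : ℝ) * (b.1:ℝ) - (a.1:ℝ) * (b.2:ℝ)| * ((a.1:ℝ) * (b.1:ℝ) * X₂) :=
        mul_le_mul_of_nonneg_right hd' (by positivity)
      have s2 : |(a.2 : ℝ) * (b.1:ℝ) - (a.1:ℝ) * (b.2:ℝ)| * ((a.1:ℝ) * (b.1:ℝ) * X₂)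
          ≤ |(a.2 : ℝ) * (b.1:ℝ) - (a.1:ℝ) * (b.2:ℝ)| * (X₁ * X₁ * X₂) :=
        mul_le_mul_of_nonneg_left (by nlinarith) (abs_nonneg _)
      nlinarith [s1, s2]
  -- Part B
  have hB : ((T.filter (fun v => ¬ P v)).card : ℝ) ≤ 2 / δ + 1 := by
    apply sep_card' _ (fun v => ((v.1 : ℝ) * X₂) / ((v.2 : ℝ) * X₁)) δ hδ
    · intro a ha
      rw [Finset.mem_filter] at ha
      obtain ⟨haT, haP⟩ := ha
      rw [hP] at haP
      push_neg at haP
      have ha2 : a.2 ≠ 0 := by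
        intro h0
        rw [h0] at haP
        simp at haP
        have : (0:ℝ) ≤ |(a.1:ℝ)| * X₂ := by positivity
        linarith
      have ha2R : ((0:ℝ)) < |(a.2 : ℝ)| := by
        simp only [abs_pos]
        exact_mod_cast ha2
      rw [abs_div, abs_mul, abs_mul, abs_of_pos hX₁0, abs_of_pos hX₂0]
      rw [div_le_one (by positivity)]
      have e1 : |(a.1 : ℝ)| = ((|a.1| : ℤ) : ℝ) := by push_cast; ring
      have e2 : |(a.2 : ℝ)| = ((|a.2| : ℤ) : ℝ) := by push_cast; ring
      rw [e1, e2]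
      nlinarith [haP]
    · intro a ha b hb hab
      rw [Finset.mem_filter] at ha hb
      obtain ⟨haT, haP⟩ := ha
      obtain ⟨hbT, hbP⟩ := hb
      rw [hP] at haP hbP
      push_neg at haP hbP
      have ha2 : a.2 ≠ 0 := by
        intro h0; rw [h0] at haP; simp at haP
        have : (0:ℝ) ≤ |(a.1:ℝ)| * X₂ := by positivity
        linarith
      have hb2 : b.2 ≠ 0 := by
        intro h0; rw [h0] at hbP; simp at hbP
        have : (0:ℝ) ≤ |(b.1:ℝ)| * X₂ := by positivity
        linarith
      have ha2R : (a.2 : ℝ) ≠ 0 := by exact_mod_cast ha2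
      have hb2R : (b.2 : ℝ) ≠ 0 := by exact_mod_cast hb2
      have key : ((a.1 : ℝ) * X₂) / ((a.2 : ℝ) * X₁) - ((b.1 : ℝ) * X₂) / ((b.2 : ℝ) * X₁)
          = (X₂ * ((a.1 : ℝ) * (b.2:ℝ) - (a.2:ℝ) * (b.1:ℝ))) / ((a.2 : ℝ) * (b.2 : ℝ) * X₁) := by
        field_simp
      rw [key, abs_div, abs_mul, abs_of_pos hX₂0]
      have hd := hsep a haT b hbT hab
      have hd' : m ≤ |(a.1 : ℝ) * (b.2:ℝ) - (a.2:ℝ) * (b.1:ℝ)| := by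
        have : |(a.1 : ℝ) * (b.2:ℝ) - (a.2:ℝ) * (b.1:ℝ)| = |((a.1 * b.2 - a.2 * b.1 : ℤ) : ℝ)| := by
          push_cast; ring_nf
        rw [this]; exact hd
      have habs : |(a.2 : ℝ) * (b.2 : ℝ) * X₁| = |(a.2:ℝ)| * |(b.2:ℝ)| * X₁ := by
        rw [abs_mul, abs_mul, abs_of_pos hX₁0]
      rw [habs, hδdef, div_le_div_iff₀ (by positivity) (by positivity)]
      have haX : |(a.2 : ℝ)| ≤ X₂ := by
        have := (hbox a haT).2
        have e2 : |(a.2 : ℝ)| = ((|a.2| : ℤ) : ℝ) := by push_cast; ring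
        linarith [e2 ▸ this]
      have hbX : |(b.2 : ℝ)| ≤ X₂ := by
        have := (hbox b hbT).2
        have e2 : |(b.2 : ℝ)| = ((|b.2| : ℤ) : ℝ) := by push_cast; ring
        linarith [e2 ▸ this]
      have ha2P : (0:ℝ) < |(a.2:ℝ)| := by simp only [abs_pos]; exact ha2R
      have hb2P : (0:ℝ) < |(b.2:ℝ)| := by simp only [abs_pos]; exact hb2R
      have h1 : |(a.2:ℝ)| * |(b.2:ℝ)| ≤ X₂ * X₂ := mul_le_mul haX hbX hb2P.le (by linarith)
      have s1 : m * (|(a.2:ℝ)| * |(b.2:ℝ)| * X₁) ≤ |(a.1 : ℝ) * (b.2:ℝ) - (a.2:ℝ) * (b.1:ℝ)| * (|(a.2:ℝ)| * |(b.2:ℝ)| * X₁) :=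
        mul_le_mul_of_nonneg_right hd' (by positivity)
      have s2 : |(a.1 : ℝ) * (b.2:ℝ) - (a.2:ℝ) * (b.1:ℝ)| * (|(a.2:ℝ)| * |(b.2:ℝ)| * X₁)
          ≤ |(a.1 : ℝ) * (b.2:ℝ) - (a.2:ℝ) * (b.1:ℝ)| * (X₂ * X₂ * X₁) :=
        mul_le_mul_of_nonneg_left (by nlinarith) (abs_nonneg _)
      nlinarith [s1, s2]
  have h2δ : 2 / δ = 2 * X₁ * X₂ / m := by
    rw [hδdef, div_div_eq_mul_div]; ring
  have hTcard : (T.card : ℝ) = ((T.filter P).card : ℝ) + ((T.filter (fun v => ¬ P v)).card : ℝ) := by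
    rw [← hsplit]; push_cast; ring
  rw [hTcard]
  rw [h2δ] at hA hB
  have hfin : 4 * X₁ * X₂ / m = 2 * X₁ * X₂ / m + 2 * X₁ * X₂ / m := by ring
  linarith

private lemma lam_dvd_det {a00 a01 a10 a11 x1 x2 y1 y2 l : ℤ}
    (hx : Int.gcd x1 x2 = 1)
    (eq1 : a00 * x1 + a10 * x2 = l * y2)
    (eq2 : a01 * x1 + a11 * x2 = -(l * y1)) :
    l ∣ (a00 * a11 - a01 * a10) := by
  have d1 : l ∣ (a00 * a11 - a01 * a10) * x1 :=
    ⟨a11 * y2 + a10 * y1, by linear_combination a11 * eq1 - a10 * eq2⟩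
  have d2 : l ∣ (a00 * a11 - a01 * a10) * x2 :=
    ⟨-(a01 * y2) - a00 * y1, by linear_combination -a01 * eq1 + a00 * eq2⟩
  obtain ⟨s, t, hst⟩ := Int.isCoprime_iff_gcd_eq_one.mpr hx
  have key : (a00 * a11 - a01 * a10)
      = s * ((a00 * a11 - a01 * a10) * x1) + t * ((a00 * a11 - a01 * a10) * x2) := by
    linear_combination (a00 * a11 - a01 * a10) * hst.symm
  rw [key]
  exact dvd_add (d1.mul_left s) (d2.mul_left t)

private lemma content_dvd_det2 {a00 a01 a10 a11 x1 x2 x1' x2' u1 u2 u1' u2' l : ℤ}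
    (hcont : Int.gcd (Int.gcd a00 a10) (Int.gcd a01 a11) = 1)
    (eq1 : a00 * x1 + a10 * x2 = l * u1) (eq2 : a01 * x1 + a11 * x2 = l * u2)
    (eq1' : a00 * x1' + a10 * x2' = l * u1') (eq2' : a01 * x1' + a11 * x2' = l * u2') :
    l ∣ (x1 * x2' - x2 * x1') := by
  set d : ℤ := x1 * x2' - x2 * x1' with hd
  have h00 : l ∣ a00 * d := ⟨u1 * x2' - u1' * x2, by rw [hd]; linear_combination x2' * eq1 - x2 * eq1'⟩
  have h10 : l ∣ a10 * d := ⟨u1' * x1 - u1 * x1', by rw [hd]; linear_combination x1 * eq1' - x1' * eq1⟩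
  have h01 : l ∣ a01 * d := ⟨u2 * x2' - u2' * x2, by rw [hd]; linear_combination x2' * eq2 - x2 * eq2'⟩
  have h11 : l ∣ a11 * d := ⟨u2' * x1 - u2 * x1', by rw [hd]; linear_combination x1 * eq2' - x1' * eq2⟩
  obtain ⟨s, t, hst⟩ := Int.isCoprime_iff_gcd_eq_one.mpr hcont
  have gab1 := Int.gcd_eq_gcd_ab a00 a10
  have gab2 := Int.gcd_eq_gcd_ab a01 a11
  have hg1 : l ∣ ((Int.gcd a00 a10 : ℤ)) * d := by
    have e : ((Int.gcd a00 a10 : ℤ)) * d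
        = (Int.gcdA a00 a10) * (a00 * d) + (Int.gcdB a00 a10) * (a10 * d) := by
      linear_combination d * gab1
    rw [e]
    exact dvd_add (h00.mul_left _) (h10.mul_left _)
  have hg2 : l ∣ ((Int.gcd a01 a11 : ℤ)) * d := by
    have e : ((Int.gcd a01 a11 : ℤ)) * d
        = (Int.gcdA a01 a11) * (a01 * d) + (Int.gcdB a01 a11) * (a11 * d) := by
      linear_combination d * gab2
    rw [e]
    exact dvd_add (h01.mul_left _) (h11.mul_left _)
  have key : d = s * (((Int.gcd a00 a10 : ℤ)) * d) + t * (((Int.gcd a01 a11 : ℤ)) * d) := by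
    linear_combination (-d) * hst
  rw [key]
  exact dvd_add (hg1.mul_left s) (hg2.mul_left t)

private lemma det_identity {a00 a01 a10 a11 x1 x2 x1' x2' y1 y2 y1' y2' l : ℤ}
    (eq1 : a00 * x1 + a10 * x2 = l * y2) (eq2 : a01 * x1 + a11 * x2 = -(l * y1))
    (eq1' : a00 * x1' + a10 * x2' = l * y2') (eq2' : a01 * x1' + a11 * x2' = -(l * y1')) :
    (a00 * a11 - a01 * a10) * (x1 * x2' - x2 * x1') = l ^ 2 * (y1 * y2' - y2 * y1') := by
  linear_combination (a01 * x1' + a11 * x2') * eq1 - (a00 * x1' + a10 * x2') * eq2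
    + (l * y1) * eq1' + (l * y2) * eq2'

private lemma perp_unique {v1 v2 y1 y2 z1 z2 : ℤ} (hv : ¬(v1 = 0 ∧ v2 = 0))
    (hy : Int.gcd y1 y2 = 1) (hz : Int.gcd z1 z2 = 1)
    (h1 : v1 * y1 + v2 * y2 = 0) (h2 : v1 * z1 + v2 * z2 = 0) :
    (z1 = y1 ∧ z2 = y2) ∨ (z1 = -y1 ∧ z2 = -y2) := by
  obtain ⟨l, hl1, hl2⟩ := perp_eq hy h1
  have hl0 : l ≠ 0 := by
    rintro rfl
    simp only [zero_mul, neg_zero] at hl1 hl2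
    exact hv ⟨hl1, hl2⟩
  apply prop_of_det_zero hy hz
  have hll : l * (y1 * z2 - y2 * z1) = 0 := by
    linear_combination -h2 + z1 * hl1 + z2 * hl2
  exact (mul_eq_zero.mp hll).resolve_left hl0

private lemma v_ne_zero {a00 a01 a10 a11 x1 x2 : ℤ} (hD : a00 * a11 - a01 * a10 ≠ 0)
    (hx : Int.gcd x1 x2 = 1) : ¬(a00 * x1 + a10 * x2 = 0 ∧ a01 * x1 + a11 * x2 = 0) := by
  rintro ⟨h1, h2⟩
  have e1 : (a00 * a11 - a01 * a10) * x1 = 0 := by linear_combination a11 * h1 - a10 * h2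
  have e2 : (a00 * a11 - a01 * a10) * x2 = 0 := by linear_combination -a01 * h1 + a00 * h2
  have hx1 : x1 = 0 := (mul_eq_zero.mp e1).resolve_left hD
  have hx2 : x2 = 0 := (mul_eq_zero.mp e2).resolve_left hD
  rw [hx1, hx2] at hx
  simp [Int.gcd] at hx

private lemma card_le_two_of_subset_pair {α : Type*} [DecidableEq α] {s : Finset α} {a b : α}
    (h : s ⊆ {a, b}) : s.card ≤ 2 :=
  (Finset.card_le_card h).trans ((Finset.card_insert_le a {b}).trans (by simp))

private lemma mem_Icc_of_abs {x : ℤ} {X : ℝ} (h : ((|x| : ℤ) : ℝ) ≤ X) :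
    x ∈ Finset.Icc (-⌈X⌉) ⌈X⌉ := by
  rw [Finset.mem_Icc]
  have h2 : ((|x| : ℤ) : ℝ) ≤ (⌈X⌉ : ℝ) := h.trans (Int.le_ceil X)
  have h3 : |x| ≤ ⌈X⌉ := by exact_mod_cast h2
  exact abs_le.mp h3

private lemma box_card_le {X : ℝ} (hX : 1 ≤ X) : ((Finset.Icc (-⌈X⌉) ⌈X⌉).card : ℝ) ≤ 5 * X := by
  rw [Int.card_Icc]
  have h1 : (1 : ℤ) ≤ ⌈X⌉ := by
    have : (0:ℝ) < X := by linarith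
    exact Int.ceil_pos.mpr this
  have h2 : ((⌈X⌉ : ℤ) : ℝ) ≤ X + 1 := le_of_lt (Int.ceil_lt_add_one X)
  have h3 : ((⌈X⌉ + 1 - -⌈X⌉).toNat : ℤ) = 2 * ⌈X⌉ + 1 := by
    rw [Int.toNat_of_nonneg (by omega)]; ring
  have h4 : (((⌈X⌉ + 1 - -⌈X⌉).toNat : ℕ) : ℝ) = ((2 * ⌈X⌉ + 1 : ℤ) : ℝ) := by
    exact_mod_cast congrArg (fun z : ℤ => (z : ℝ)) h3
  rw [h4]
  push_cast
  linarith

private lemma ne_zero_of_gcd_one {x1 x2 : ℤ} (h : Int.gcd x1 x2 = 1) : ¬(x1 = 0 ∧ x2 = 0) := by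
  rintro ⟨rfl, rfl⟩
  simp [Int.gcd] at h

private lemma normv_cases (w : ℤ × ℤ) :
    ((normv w).1 = w.1 ∧ (normv w).2 = w.2) ∨ ((normv w).1 = -w.1 ∧ (normv w).2 = -w.2) := by
  rcases normv_eq_or w with h | h
  · left; rw [h]; exact ⟨rfl, rfl⟩
  · right; rw [h]; exact ⟨rfl, rfl⟩

private lemma abs_det_normv (w w' : ℤ × ℤ) :
    |(normv w).1 * (normv w').2 - (normv w).2 * (normv w').1| = |w.1 * w'.2 - w.2 * w'.1| := by
  rcases normv_cases w with ⟨e1, e2⟩ | ⟨e1, e2⟩ <;> rcases normv_cases w' with ⟨f1, f2⟩ | ⟨f1, f2⟩ <;>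
    rw [e1, e2, f1, f2]
  · rw [show w.1 * -w'.2 - w.2 * -w'.1 = -(w.1 * w'.2 - w.2 * w'.1) by ring, abs_neg]
  · rw [show -w.1 * w'.2 - -w.2 * w'.1 = -(w.1 * w'.2 - w.2 * w'.1) by ring, abs_neg]
  · rw [show -w.1 * -w'.2 - -w.2 * -w'.1 = w.1 * w'.2 - w.2 * w'.1 by ring]

private lemma cast_abs_det (z : ℤ) : |((z : ℤ) : ℝ)| = ((z.natAbs : ℕ) : ℝ) := by
  rw [Nat.cast_natAbs, Int.cast_abs]

private lemma boundD {A00 A01 A10 A11 D : ℤ}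
    (hcont : Int.gcd (Int.gcd A00 A10) (Int.gcd A01 A11) = 1)
    (hDdef : D = A00 * A11 - A01 * A10) (hD0 : D ≠ 0)
    {X₁ X₂ Y₁ Y₂ : ℝ} (hX₁ : 1 ≤ X₁) (hX₂ : 1 ≤ X₂) (hY₁ : 1 ≤ Y₁) (hY₂ : 1 ≤ Y₂)
    (SF : Finset ((ℤ × ℤ) × (ℤ × ℤ)))
    (hmemS : ∀ p ∈ SF, ((|p.1.1| : ℤ) : ℝ) ≤ X₁ ∧ ((|p.1.2| : ℤ) : ℝ) ≤ X₂ ∧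
      ((|p.2.1| : ℤ) : ℝ) ≤ Y₁ ∧ ((|p.2.2| : ℤ) : ℝ) ≤ Y₂ ∧
      Int.gcd p.1.1 p.1.2 = 1 ∧ Int.gcd p.2.1 p.2.2 = 1 ∧
      A00 * p.1.1 * p.2.1 + A01 * p.1.1 * p.2.2 +
        A10 * p.1.2 * p.2.1 + A11 * p.1.2 * p.2.2 = 0) :
    (SF.card : ℝ) ≤ 50 * ((D.natAbs.divisors.card : ℝ) *
      (Real.sqrt (X₁ * X₂ * Y₁ * Y₂ / |(D : ℝ)|) + 1)) := by
  classical
  have hD0' : A00 * A11 - A01 * A10 ≠ 0 := by rw [← hDdef]; exact hD0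
  have hDn : (0 : ℝ) < (D.natAbs : ℝ) := by exact_mod_cast Int.natAbs_pos.mpr hD0
  set E := Real.sqrt (X₁ * X₂ * Y₁ * Y₂ / |(D : ℝ)|) with hE
  have hE0 : 0 ≤ E := Real.sqrt_nonneg _
  have habsD : |(D : ℝ)| = (D.natAbs : ℝ) := by rw [Nat.cast_natAbs, Int.cast_abs]
  have hperp : ∀ p ∈ SF, (A00 * p.1.1 + A10 * p.1.2) * p.2.1 +
      (A01 * p.1.1 + A11 * p.1.2) * p.2.2 = 0 := by
    intro p hp
    obtain ⟨-, -, -, -, -, -, heq⟩ := hmemS p hp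
    linear_combination heq
  set Λ : Finset ℤ := (D.natAbs.divisors.image (fun n : ℕ => (n : ℤ))) ∪
      (D.natAbs.divisors.image (fun n : ℕ => -(n : ℤ))) with hΛ
  have hΛne : ∀ l ∈ Λ, l ≠ 0 := by
    intro l hl
    rw [hΛ, Finset.mem_union] at hl
    rcases hl with h | h
    · obtain ⟨n, hn, rfl⟩ := Finset.mem_image.mp h
      have := Nat.pos_of_mem_divisors hn
      exact_mod_cast this.ne'
    · obtain ⟨n, hn, rfl⟩ := Finset.mem_image.mp h
      have := Nat.pos_of_mem_divisors hn
      simp only [ne_eq, neg_eq_zero]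
      exact_mod_cast this.ne'
  have hΛcard : (Λ.card : ℝ) ≤ 2 * (D.natAbs.divisors.card : ℝ) := by
    have hc : Λ.card ≤ 2 * D.natAbs.divisors.card := by
      rw [hΛ]
      refine le_trans (Finset.card_union_le _ _) ?_
      have h2 := Finset.card_image_le (f := fun n : ℕ => (n : ℤ)) (s := D.natAbs.divisors)
      have h3 := Finset.card_image_le (f := fun n : ℕ => -(n : ℤ)) (s := D.natAbs.divisors)
      omega
    exact_mod_cast hc
  have hΛmem : ∀ l : ℤ, l ≠ 0 → l ∣ D → l ∈ Λ := by
    intro l hl0 hlD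
    have h1 : l.natAbs ∈ D.natAbs.divisors :=
      Nat.mem_divisors.mpr ⟨Int.natAbs_dvd_natAbs.mpr hlD, Int.natAbs_ne_zero.mpr hD0⟩
    rw [hΛ, Finset.mem_union]
    rcases Int.natAbs_eq l with h | h
    · exact Or.inl (Finset.mem_image.mpr ⟨l.natAbs, h1, h.symm⟩)
    · exact Or.inr (Finset.mem_image.mpr ⟨l.natAbs, h1, h.symm⟩)
  have hcover : SF ⊆ Λ.biUnion (fun l => SF.filter (fun p =>
      A00 * p.1.1 + A10 * p.1.2 = l * p.2.2 ∧ A01 * p.1.1 + A11 * p.1.2 = -(l * p.2.1))) := by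
    intro p hp
    obtain ⟨-, -, -, -, hgx, hgy, -⟩ := hmemS p hp
    obtain ⟨l, hl1, hl2⟩ := perp_eq hgy (hperp p hp)
    have hl0 : l ≠ 0 := by
      rintro rfl
      simp only [zero_mul, neg_zero] at hl1 hl2
      exact v_ne_zero hD0' hgx ⟨hl1, hl2⟩
    have hlD : l ∣ D := by rw [hDdef]; exact lam_dvd_det hgx hl1 hl2
    exact Finset.mem_biUnion.mpr ⟨l, hΛmem l hl0 hlD, Finset.mem_filter.mpr ⟨hp, hl1, hl2⟩⟩
  have hsum : SF.card ≤ ∑ l ∈ Λ, (SF.filter (fun p =>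
      A00 * p.1.1 + A10 * p.1.2 = l * p.2.2 ∧
        A01 * p.1.1 + A11 * p.1.2 = -(l * p.2.1))).card :=
    (Finset.card_le_card hcover).trans Finset.card_biUnion_le
  have hper : ∀ l ∈ Λ, ((SF.filter (fun p =>
      A00 * p.1.1 + A10 * p.1.2 = l * p.2.2 ∧
        A01 * p.1.1 + A11 * p.1.2 = -(l * p.2.1))).card : ℝ) ≤ 8 * E + 8 := by
    intro l hlΛ
    have hl0 : l ≠ 0 := hΛne l hlΛ
    have hLpos : (0 : ℝ) < (l.natAbs : ℝ) := by exact_mod_cast Int.natAbs_pos.mpr hl0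
    set F := SF.filter (fun p =>
      A00 * p.1.1 + A10 * p.1.2 = l * p.2.2 ∧
        A01 * p.1.1 + A11 * p.1.2 = -(l * p.2.1)) with hFdef
    have hmemF : ∀ p ∈ F, p ∈ SF ∧ (A00 * p.1.1 + A10 * p.1.2 = l * p.2.2 ∧
        A01 * p.1.1 + A11 * p.1.2 = -(l * p.2.1)) := by
      intro p hp
      exact Finset.mem_filter.mp hp
    have hxne : ∀ p ∈ F, ¬(p.1.1 = 0 ∧ p.1.2 = 0) := by
      intro p hp
      obtain ⟨hpS, -⟩ := hmemF p hp
      obtain ⟨-, -, -, -, hgx, -, -⟩ := hmemS p hpS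
      exact ne_zero_of_gcd_one hgx
    have hyne : ∀ p ∈ F, ¬(p.2.1 = 0 ∧ p.2.2 = 0) := by
      intro p hp
      obtain ⟨hpS, -⟩ := hmemF p hp
      obtain ⟨-, -, -, -, -, hgy, -⟩ := hmemS p hpS
      exact ne_zero_of_gcd_one hgy
    -- determination lemmas
    have hdetx : ∀ q ∈ F, ∀ r ∈ F, r.1.1 = q.1.1 → r.1.2 = q.1.2 → r = q := by
      intro q hq r hr e1 e2
      obtain ⟨hqS, hq1, hq2⟩ := hmemF q hq
      obtain ⟨hrS, hr1, hr2⟩ := hmemF r hr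
      rw [e1, e2] at hr1 hr2
      have f3 : r.2.2 = q.2.2 := by
        apply mul_left_cancel₀ hl0
        linear_combination hq1 - hr1
      have f4 : r.2.1 = q.2.1 := by
        apply mul_left_cancel₀ hl0
        linear_combination hr2 - hq2
      rw [Prod.ext_iff]
      exact ⟨by rw [Prod.ext_iff]; exact ⟨e1, e2⟩, by rw [Prod.ext_iff]; exact ⟨f4, f3⟩⟩
    have hdetxneg : ∀ q ∈ F, ∀ r ∈ F, r.1.1 = -q.1.1 → r.1.2 = -q.1.2 →
        r = ((-q.1.1, -q.1.2), (-q.2.1, -q.2.2)) := by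
      intro q hq r hr e1 e2
      obtain ⟨hqS, hq1, hq2⟩ := hmemF q hq
      obtain ⟨hrS, hr1, hr2⟩ := hmemF r hr
      rw [e1, e2] at hr1 hr2
      have f3 : r.2.2 = -q.2.2 := by
        apply mul_left_cancel₀ hl0
        linear_combination -hq1 - hr1
      have f4 : r.2.1 = -q.2.1 := by
        apply mul_left_cancel₀ hl0
        linear_combination hr2 + hq2
      rw [Prod.ext_iff]
      exact ⟨by rw [Prod.ext_iff]; exact ⟨e1, e2⟩, by rw [Prod.ext_iff]; exact ⟨f4, f3⟩⟩
    have hdety : ∀ q ∈ F, ∀ r ∈ F, r.2.1 = q.2.1 → r.2.2 = q.2.2 → r = q := by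
      intro q hq r hr e1 e2
      obtain ⟨hqS, hq1, hq2⟩ := hmemF q hq
      obtain ⟨hrS, hr1, hr2⟩ := hmemF r hr
      rw [e2] at hr1
      rw [e1] at hr2
      have f1 : r.1.1 = q.1.1 := by
        apply mul_left_cancel₀ hD0'
        linear_combination A11 * hr1 - A11 * hq1 - A10 * hr2 + A10 * hq2
      have f2 : r.1.2 = q.1.2 := by
        apply mul_left_cancel₀ hD0'
        linear_combination -A01 * hr1 + A01 * hq1 + A00 * hr2 - A00 * hq2
      rw [Prod.ext_iff]
      exact ⟨by rw [Prod.ext_iff]; exact ⟨f1, f2⟩, by rw [Prod.ext_iff]; exact ⟨e1, e2⟩⟩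
    have hdetyneg : ∀ q ∈ F, ∀ r ∈ F, r.2.1 = -q.2.1 → r.2.2 = -q.2.2 →
        r = ((-q.1.1, -q.1.2), (-q.2.1, -q.2.2)) := by
      intro q hq r hr e1 e2
      obtain ⟨hqS, hq1, hq2⟩ := hmemF q hq
      obtain ⟨hrS, hr1, hr2⟩ := hmemF r hr
      rw [e2] at hr1
      rw [e1] at hr2
      have f1 : r.1.1 = -q.1.1 := by
        apply mul_left_cancel₀ hD0'
        linear_combination A11 * hr1 + A11 * hq1 - A10 * hr2 - A10 * hq2
      have f2 : r.1.2 = -q.1.2 := by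
        apply mul_left_cancel₀ hD0'
        linear_combination -A01 * hr1 - A01 * hq1 + A00 * hr2 + A00 * hq2
      rw [Prod.ext_iff]
      exact ⟨by rw [Prod.ext_iff]; exact ⟨f1, f2⟩, by rw [Prod.ext_iff]; exact ⟨e1, e2⟩⟩
    -- nonvanishing of x-determinant
    have hdx : ∀ q ∈ F, ∀ r ∈ F, normv q.1 ≠ normv r.1 →
        q.1.1 * r.1.2 - q.1.2 * r.1.1 ≠ 0 := by
      intro q hq r hr hne h0
      obtain ⟨hqS, -⟩ := hmemF q hq
      obtain ⟨hrS, -⟩ := hmemF r hr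
      obtain ⟨-, -, -, -, hqgx, -, -⟩ := hmemS q hqS
      obtain ⟨-, -, -, -, hrgx, -, -⟩ := hmemS r hrS
      rcases prop_of_det_zero hqgx hrgx h0 with ⟨e1, e2⟩ | ⟨e1, e2⟩
      · apply hne
        have : r.1 = q.1 := by rw [Prod.ext_iff]; exact ⟨e1, e2⟩
        rw [this]
      · apply hne
        have : r.1 = (-q.1.1, -q.1.2) := by rw [Prod.ext_iff]; exact ⟨e1, e2⟩
        rw [this, normv_neg (hxne q hq)]
    have hdxy : ∀ q ∈ F, ∀ r ∈ F, normv q.2 ≠ normv r.2 →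
        q.1.1 * r.1.2 - q.1.2 * r.1.1 ≠ 0 := by
      intro q hq r hr hne h0
      obtain ⟨hqS, -⟩ := hmemF q hq
      obtain ⟨hrS, -⟩ := hmemF r hr
      obtain ⟨-, -, -, -, hqgx, -, -⟩ := hmemS q hqS
      obtain ⟨-, -, -, -, hrgx, -, -⟩ := hmemS r hrS
      rcases prop_of_det_zero hqgx hrgx h0 with ⟨e1, e2⟩ | ⟨e1, e2⟩
      · have hrq := hdetx q hq r hr e1 e2
        apply hne
        rw [hrq]
      · have hrq := hdetxneg q hq r hr e1 e2
        apply hne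
        rw [hrq]
        exact (normv_neg (hyne q hq)).symm
    have hdvd : ∀ q ∈ F, ∀ r ∈ F, l ∣ (q.1.1 * r.1.2 - q.1.2 * r.1.1) := by
      intro q hq r hr
      obtain ⟨hqS, hq1, hq2⟩ := hmemF q hq
      obtain ⟨hrS, hr1, hr2⟩ := hmemF r hr
      exact content_dvd_det2 (u2 := -q.2.1) (u2' := -r.2.1) hcont hq1 (by linear_combination hq2) hr1 (by linear_combination hr2)
    have hident : ∀ q ∈ F, ∀ r ∈ F, D * (q.1.1 * r.1.2 - q.1.2 * r.1.1)
        = l ^ 2 * (q.2.1 * r.2.2 - q.2.2 * r.2.1) := by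
      intro q hq r hr
      obtain ⟨hqS, hq1, hq2⟩ := hmemF q hq
      obtain ⟨hrS, hr1, hr2⟩ := hmemF r hr
      rw [hDdef]
      exact det_identity hq1 hq2 hr1 hr2
    -- Tx bound
    have hTx : ((F.image (fun p => normv p.1)).card : ℝ)
        ≤ 4 * X₁ * X₂ / (l.natAbs : ℝ) + 2 := by
      apply count_lemma _ X₁ X₂ _ hX₁ hX₂ hLpos
      · intro b hb
        obtain ⟨q, hq, hqb⟩ := Finset.mem_image.mp hb
        obtain ⟨hqS, -⟩ := hmemF q hq
        obtain ⟨h1, h2, -⟩ := hmemS q hqS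
        rcases normv_cases q.1 with ⟨e1, e2⟩ | ⟨e1, e2⟩
        · constructor
          · rw [← hqb, e1]; exact h1
          · rw [← hqb, e2]; exact h2
        · constructor
          · rw [← hqb, e1, abs_neg]; exact h1
          · rw [← hqb, e2, abs_neg]; exact h2
      · intro b hb
        obtain ⟨q, hq, hqb⟩ := Finset.mem_image.mp hb
        rw [← hqb]
        exact normv_pos (hxne q hq)
      · intro b hb b' hb' hne
        obtain ⟨q, hq, hqb⟩ := Finset.mem_image.mp hb
        obtain ⟨q', hq', hqb'⟩ := Finset.mem_image.mp hb'
        have hneq : normv q.1 ≠ normv q'.1 := by rw [hqb, hqb']; exact hne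
        have h0 := hdx q hq q' hq' hneq
        have hd := hdvd q hq q' hq'
        have hle : l.natAbs ≤ (q.1.1 * q'.1.2 - q.1.2 * q'.1.1).natAbs :=
          Nat.le_of_dvd (Int.natAbs_pos.mpr h0) (Int.natAbs_dvd_natAbs.mpr hd)
        have hnat : (b.1 * b'.2 - b.2 * b'.1).natAbs
            = (q.1.1 * q'.1.2 - q.1.2 * q'.1.1).natAbs := by
          have habs : |b.1 * b'.2 - b.2 * b'.1| = |q.1.1 * q'.1.2 - q.1.2 * q'.1.1| := by
            rw [← hqb, ← hqb']
            exact abs_det_normv q.1 q'.1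
          have := congrArg Int.natAbs habs
          simpa [Int.natAbs_abs] using this
        rw [cast_abs_det, hnat]
        exact_mod_cast hle
    have hFx : F.card ≤ 2 * (F.image (fun p => normv p.1)).card := by
      apply Finset.card_le_mul_card_image
      intro b hb
      obtain ⟨q, hq, hqb⟩ := Finset.mem_image.mp hb
      apply card_le_two_of_subset_pair (a := q) (b := ((-q.1.1, -q.1.2), (-q.2.1, -q.2.2)))
      intro r hr
      rw [Finset.mem_filter] at hr
      obtain ⟨hrF, hrb⟩ := hr
      have heqn : normv r.1 = normv q.1 := by rw [hrb, ← hqb]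
      have he1 : (normv r.1).1 = (normv q.1).1 := by rw [heqn]
      have he2 : (normv r.1).2 = (normv q.1).2 := by rw [heqn]
      have hcase : (r.1.1 = q.1.1 ∧ r.1.2 = q.1.2) ∨ (r.1.1 = -q.1.1 ∧ r.1.2 = -q.1.2) := by
        rcases normv_cases r.1 with ⟨u1, u2⟩ | ⟨u1, u2⟩ <;>
          rcases normv_cases q.1 with ⟨w1, w2⟩ | ⟨w1, w2⟩ <;> [left; right; right; left] <;>
          constructor <;> omega
      rcases hcase with ⟨e1, e2⟩ | ⟨e1, e2⟩
      · rw [hdetx q hq r hrF e1 e2]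
        exact Finset.mem_insert_self _ _
      · rw [hdetxneg q hq r hrF e1 e2]
        exact Finset.mem_insert_of_mem (Finset.mem_singleton_self _)
    -- Ty bound
    have hTy : ((F.image (fun p => normv p.2)).card : ℝ)
        ≤ 4 * Y₁ * Y₂ / ((D.natAbs : ℝ) / (l.natAbs : ℝ)) + 2 := by
      apply count_lemma _ Y₁ Y₂ _ hY₁ hY₂ (div_pos hDn hLpos)
      · intro b hb
        obtain ⟨q, hq, hqb⟩ := Finset.mem_image.mp hb
        obtain ⟨hqS, -⟩ := hmemF q hq
        obtain ⟨-, -, h3, h4, -⟩ := hmemS q hqS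
        rcases normv_cases q.2 with ⟨e1, e2⟩ | ⟨e1, e2⟩
        · constructor
          · rw [← hqb, e1]; exact h3
          · rw [← hqb, e2]; exact h4
        · constructor
          · rw [← hqb, e1, abs_neg]; exact h3
          · rw [← hqb, e2, abs_neg]; exact h4
      · intro b hb
        obtain ⟨q, hq, hqb⟩ := Finset.mem_image.mp hb
        rw [← hqb]
        exact normv_pos (hyne q hq)
      · intro b hb b' hb' hne
        obtain ⟨q, hq, hqb⟩ := Finset.mem_image.mp hb
        obtain ⟨q', hq', hqb'⟩ := Finset.mem_image.mp hb'
        have hneq : normv q.2 ≠ normv q'.2 := by rw [hqb, hqb']; exact hne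
        have h0 := hdxy q hq q' hq' hneq
        have hd := hdvd q hq q' hq'
        have hidq := hident q hq q' hq'
        have hle : l.natAbs ≤ (q.1.1 * q'.1.2 - q.1.2 * q'.1.1).natAbs :=
          Nat.le_of_dvd (Int.natAbs_pos.mpr h0) (Int.natAbs_dvd_natAbs.mpr hd)
        have hleR : (l.natAbs : ℝ) ≤ ((q.1.1 * q'.1.2 - q.1.2 * q'.1.1).natAbs : ℝ) := by
          exact_mod_cast hle
        have hnatid : D.natAbs * (q.1.1 * q'.1.2 - q.1.2 * q'.1.1).natAbs
            = l.natAbs ^ 2 * (q.2.1 * q'.2.2 - q.2.2 * q'.2.1).natAbs := by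
          have := congrArg Int.natAbs hidq
          rwa [Int.natAbs_mul, Int.natAbs_mul, Int.natAbs_pow] at this
        have hnatidR : (D.natAbs : ℝ) * ((q.1.1 * q'.1.2 - q.1.2 * q'.1.1).natAbs : ℝ)
            = (l.natAbs : ℝ) ^ 2 * ((q.2.1 * q'.2.2 - q.2.2 * q'.2.1).natAbs : ℝ) := by
          exact_mod_cast hnatid
        have hnat : (b.1 * b'.2 - b.2 * b'.1).natAbs
            = (q.2.1 * q'.2.2 - q.2.2 * q'.2.1).natAbs := by
          have habs : |b.1 * b'.2 - b.2 * b'.1| = |q.2.1 * q'.2.2 - q.2.2 * q'.2.1| := by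
            rw [← hqb, ← hqb']
            exact abs_det_normv q.2 q'.2
          have := congrArg Int.natAbs habs
          simpa [Int.natAbs_abs] using this
        rw [cast_abs_det, hnat, div_le_iff₀ hLpos]
        nlinarith [hnatidR, hleR, hDn, hLpos,
          (Nat.cast_nonneg (q.2.1 * q'.2.2 - q.2.2 * q'.2.1).natAbs : (0:ℝ) ≤ _)]
    have hFy : F.card ≤ 2 * (F.image (fun p => normv p.2)).card := by
      apply Finset.card_le_mul_card_image
      intro b hb
      obtain ⟨q, hq, hqb⟩ := Finset.mem_image.mp hb
      apply card_le_two_of_subset_pair (a := q) (b := ((-q.1.1, -q.1.2), (-q.2.1, -q.2.2)))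
      intro r hr
      rw [Finset.mem_filter] at hr
      obtain ⟨hrF, hrb⟩ := hr
      have heqn : normv r.2 = normv q.2 := by rw [hrb, ← hqb]
      have he1 : (normv r.2).1 = (normv q.2).1 := by rw [heqn]
      have he2 : (normv r.2).2 = (normv q.2).2 := by rw [heqn]
      have hcase : (r.2.1 = q.2.1 ∧ r.2.2 = q.2.2) ∨ (r.2.1 = -q.2.1 ∧ r.2.2 = -q.2.2) := by
        rcases normv_cases r.2 with ⟨u1, u2⟩ | ⟨u1, u2⟩ <;>
          rcases normv_cases q.2 with ⟨w1, w2⟩ | ⟨w1, w2⟩ <;> [left; right; right; left] <;>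
          constructor <;> omega
      rcases hcase with ⟨e1, e2⟩ | ⟨e1, e2⟩
      · rw [hdety q hq r hrF e1 e2]
        exact Finset.mem_insert_self _ _
      · rw [hdetyneg q hq r hrF e1 e2]
        exact Finset.mem_insert_of_mem (Finset.mem_singleton_self _)
    -- combine
    have hc1 : (F.card : ℝ) ≤ 2 * (4 * X₁ * X₂ / (l.natAbs : ℝ)) + 4 := by
      have h := hTx
      have h2 : (F.card : ℝ) ≤ 2 * ((F.image (fun p => normv p.1)).card : ℝ) := by
        exact_mod_cast hFx
      linarith
    have hc2 : (F.card : ℝ) ≤ 2 * (4 * Y₁ * Y₂ * (l.natAbs : ℝ) / (D.natAbs : ℝ)) + 4 := by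
      have hBeq : 4 * Y₁ * Y₂ / ((D.natAbs : ℝ) / (l.natAbs : ℝ))
          = 4 * Y₁ * Y₂ * (l.natAbs : ℝ) / (D.natAbs : ℝ) := by
        field_simp
      have h := hTy
      rw [hBeq] at h
      have h2 : (F.card : ℝ) ≤ 2 * ((F.image (fun p => normv p.2)).card : ℝ) := by
        exact_mod_cast hFy
      linarith
    have hminE : min (4 * X₁ * X₂ / (l.natAbs : ℝ)) (4 * Y₁ * Y₂ * (l.natAbs : ℝ) / (D.natAbs : ℝ))
        ≤ 4 * E := by
      have hA0 : (0:ℝ) ≤ 4 * X₁ * X₂ / (l.natAbs : ℝ) := by positivity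
      have hB0 : (0:ℝ) ≤ 4 * Y₁ * Y₂ * (l.natAbs : ℝ) / (D.natAbs : ℝ) := by positivity
      have hm0 : (0:ℝ) ≤ min (4 * X₁ * X₂ / (l.natAbs : ℝ))
          (4 * Y₁ * Y₂ * (l.natAbs : ℝ) / (D.natAbs : ℝ)) := le_min hA0 hB0
      have hprod : (4 * X₁ * X₂ / (l.natAbs : ℝ)) * (4 * Y₁ * Y₂ * (l.natAbs : ℝ) / (D.natAbs : ℝ))
          = 16 * (X₁ * X₂ * Y₁ * Y₂ / (D.natAbs : ℝ)) := by
        field_simp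
        ring
      have hsq : (min (4 * X₁ * X₂ / (l.natAbs : ℝ))
          (4 * Y₁ * Y₂ * (l.natAbs : ℝ) / (D.natAbs : ℝ))) ^ 2
          ≤ 16 * (X₁ * X₂ * Y₁ * Y₂ / (D.natAbs : ℝ)) := by
        rw [← hprod]
        have h1 := min_le_left (4 * X₁ * X₂ / (l.natAbs : ℝ))
          (4 * Y₁ * Y₂ * (l.natAbs : ℝ) / (D.natAbs : ℝ))
        have h2 := min_le_right (4 * X₁ * X₂ / (l.natAbs : ℝ))
          (4 * Y₁ * Y₂ * (l.natAbs : ℝ) / (D.natAbs : ℝ))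
        nlinarith [hm0]
      calc min (4 * X₁ * X₂ / (l.natAbs : ℝ)) (4 * Y₁ * Y₂ * (l.natAbs : ℝ) / (D.natAbs : ℝ))
          = Real.sqrt ((min (4 * X₁ * X₂ / (l.natAbs : ℝ))
            (4 * Y₁ * Y₂ * (l.natAbs : ℝ) / (D.natAbs : ℝ))) ^ 2) := (Real.sqrt_sq hm0).symm
        _ ≤ Real.sqrt (16 * (X₁ * X₂ * Y₁ * Y₂ / (D.natAbs : ℝ))) := Real.sqrt_le_sqrt hsq
        _ = 4 * E := by
            rw [hE, habsD]
            rw [show (16:ℝ) * (X₁ * X₂ * Y₁ * Y₂ / (D.natAbs : ℝ))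
              = 4 ^ 2 * (X₁ * X₂ * Y₁ * Y₂ / (D.natAbs : ℝ)) by norm_num]
            rw [Real.sqrt_mul (by positivity) _, Real.sqrt_sq (by norm_num)]
    rcases le_total (4 * X₁ * X₂ / (l.natAbs : ℝ))
        (4 * Y₁ * Y₂ * (l.natAbs : ℝ) / (D.natAbs : ℝ)) with hm | hm
    · have h := hminE
      rw [min_eq_left hm] at h
      linarith
    · have h := hminE
      rw [min_eq_right hm] at h
      linarith
  calc (SF.card : ℝ)
      ≤ ((∑ l ∈ Λ, (SF.filter (fun p =>
          A00 * p.1.1 + A10 * p.1.2 = l * p.2.2 ∧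
            A01 * p.1.1 + A11 * p.1.2 = -(l * p.2.1))).card : ℕ) : ℝ) := by exact_mod_cast hsum
    _ = ∑ l ∈ Λ, (((SF.filter (fun p =>
          A00 * p.1.1 + A10 * p.1.2 = l * p.2.2 ∧
            A01 * p.1.1 + A11 * p.1.2 = -(l * p.2.1))).card : ℕ) : ℝ) := by push_cast; rfl
    _ ≤ ∑ _l ∈ Λ, (8 * E + 8) := Finset.sum_le_sum hper
    _ = Λ.card * (8 * E + 8) := by rw [Finset.sum_const, nsmul_eq_mul]
    _ ≤ (2 * (D.natAbs.divisors.card : ℝ)) * (8 * E + 8) :=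
        mul_le_mul_of_nonneg_right hΛcard (by positivity)
    _ ≤ 50 * ((D.natAbs.divisors.card : ℝ) * (E + 1)) := by
        have hd0 : (0:ℝ) ≤ (D.natAbs.divisors.card : ℝ) := Nat.cast_nonneg _
        nlinarith [mul_nonneg hd0 hE0]

private lemma boundX {A00 A01 A10 A11 D : ℤ}
    (hDdef : D = A00 * A11 - A01 * A10) (hD0 : D ≠ 0)
    {X₁ X₂ Y₁ Y₂ : ℝ} (hX₁ : 1 ≤ X₁) (hX₂ : 1 ≤ X₂)
    (SF : Finset ((ℤ × ℤ) × (ℤ × ℤ)))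
    (hmemS : ∀ p ∈ SF, ((|p.1.1| : ℤ) : ℝ) ≤ X₁ ∧ ((|p.1.2| : ℤ) : ℝ) ≤ X₂ ∧
      ((|p.2.1| : ℤ) : ℝ) ≤ Y₁ ∧ ((|p.2.2| : ℤ) : ℝ) ≤ Y₂ ∧
      Int.gcd p.1.1 p.1.2 = 1 ∧ Int.gcd p.2.1 p.2.2 = 1 ∧
      A00 * p.1.1 * p.2.1 + A01 * p.1.1 * p.2.2 +
        A10 * p.1.2 * p.2.1 + A11 * p.1.2 * p.2.2 = 0) :
    (SF.card : ℝ) ≤ 50 * (X₁ * X₂) := by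
  classical
  have hD0' : A00 * A11 - A01 * A10 ≠ 0 := by rw [← hDdef]; exact hD0
  have hperp : ∀ p ∈ SF, (A00 * p.1.1 + A10 * p.1.2) * p.2.1 +
      (A01 * p.1.1 + A11 * p.1.2) * p.2.2 = 0 := by
    intro p hp
    obtain ⟨-, -, -, -, -, -, heq⟩ := hmemS p hp
    linear_combination heq
  have key : SF.card ≤ 2 * (SF.image (fun p => p.1)).card := by
    apply Finset.card_le_mul_card_image
    intro b hb
    obtain ⟨q, hqF, hqb⟩ := Finset.mem_image.mp hb
    apply card_le_two_of_subset_pair (a := q) (b := (q.1, (-q.2.1, -q.2.2)))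
    intro r hr
    rw [Finset.mem_filter] at hr
    obtain ⟨hrF, hrb⟩ := hr
    obtain ⟨-, -, -, -, hqgx, hqgy, -⟩ := hmemS q hqF
    obtain ⟨-, -, -, -, -, hrgy, -⟩ := hmemS r hrF
    have hvne := v_ne_zero (a00 := A00) (a01 := A01) (a10 := A10) (a11 := A11) hD0' hqgx
    have h1 := hperp q hqF
    have h2 := hperp r hrF
    have hrq : r.1 = q.1 := by rw [hrb, ← hqb]
    rw [hrq] at h2
    rcases perp_unique hvne hqgy hrgy h1 h2 with ⟨e1, e2⟩ | ⟨e1, e2⟩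
    · have hrqq : r = q := by
        rw [Prod.ext_iff]
        exact ⟨hrq, by rw [Prod.ext_iff]; exact ⟨e1, e2⟩⟩
      rw [hrqq]
      exact Finset.mem_insert_self _ _
    · have hrqq : r = (q.1, (-q.2.1, -q.2.2)) := by
        rw [Prod.ext_iff]
        exact ⟨hrq, by rw [Prod.ext_iff]; exact ⟨e1, e2⟩⟩
      rw [hrqq]
      exact Finset.mem_insert_of_mem (Finset.mem_singleton_self _)
  have himg : (SF.image (fun p => p.1)) ⊆
      (Finset.Icc (-⌈X₁⌉) ⌈X₁⌉) ×ˢ (Finset.Icc (-⌈X₂⌉) ⌈X₂⌉) := by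
    intro b hb
    obtain ⟨q, hqF, hqb⟩ := Finset.mem_image.mp hb
    obtain ⟨h1, h2, -⟩ := hmemS q hqF
    rw [← hqb, Finset.mem_product]
    exact ⟨mem_Icc_of_abs h1, mem_Icc_of_abs h2⟩
  have hcard2 : ((SF.image (fun p => p.1)).card : ℝ) ≤ 25 * (X₁ * X₂) := by
    have hle := Finset.card_le_card himg
    rw [Finset.card_product] at hle
    calc ((SF.image (fun p => p.1)).card : ℝ)
        ≤ ((Finset.Icc (-⌈X₁⌉) ⌈X₁⌉).card : ℝ) * ((Finset.Icc (-⌈X₂⌉) ⌈X₂⌉).card : ℝ) := by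
          exact_mod_cast hle
      _ ≤ (5 * X₁) * (5 * X₂) :=
          mul_le_mul (box_card_le hX₁) (box_card_le hX₂) (by positivity) (by positivity)
      _ = 25 * (X₁ * X₂) := by ring
  calc (SF.card : ℝ) ≤ 2 * ((SF.image (fun p => p.1)).card : ℝ) := by exact_mod_cast key
    _ ≤ 2 * (25 * (X₁ * X₂)) := by linarith
    _ = 50 * (X₁ * X₂) := by ring

private lemma boundY {A00 A01 A10 A11 D : ℤ}
    (hDdef : D = A00 * A11 - A01 * A10) (hD0 : D ≠ 0)
    {X₁ X₂ Y₁ Y₂ : ℝ} (hY₁ : 1 ≤ Y₁) (hY₂ : 1 ≤ Y₂)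
    (SF : Finset ((ℤ × ℤ) × (ℤ × ℤ)))
    (hmemS : ∀ p ∈ SF, ((|p.1.1| : ℤ) : ℝ) ≤ X₁ ∧ ((|p.1.2| : ℤ) : ℝ) ≤ X₂ ∧
      ((|p.2.1| : ℤ) : ℝ) ≤ Y₁ ∧ ((|p.2.2| : ℤ) : ℝ) ≤ Y₂ ∧
      Int.gcd p.1.1 p.1.2 = 1 ∧ Int.gcd p.2.1 p.2.2 = 1 ∧
      A00 * p.1.1 * p.2.1 + A01 * p.1.1 * p.2.2 +
        A10 * p.1.2 * p.2.1 + A11 * p.1.2 * p.2.2 = 0) :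
    (SF.card : ℝ) ≤ 50 * (Y₁ * Y₂) := by
  classical
  have hD0' : A00 * A11 - A10 * A01 ≠ 0 := by
    intro h; apply hD0; rw [hDdef]; linear_combination h
  have hperp2 : ∀ p ∈ SF, (A00 * p.2.1 + A01 * p.2.2) * p.1.1 +
      (A10 * p.2.1 + A11 * p.2.2) * p.1.2 = 0 := by
    intro p hp
    obtain ⟨-, -, -, -, -, -, heq⟩ := hmemS p hp
    linear_combination heq
  have key : SF.card ≤ 2 * (SF.image (fun p => p.2)).card := by
    apply Finset.card_le_mul_card_image
    intro b hb
    obtain ⟨q, hqF, hqb⟩ := Finset.mem_image.mp hb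
    apply card_le_two_of_subset_pair (a := q) (b := ((-q.1.1, -q.1.2), q.2))
    intro r hr
    rw [Finset.mem_filter] at hr
    obtain ⟨hrF, hrb⟩ := hr
    obtain ⟨-, -, -, -, hqgx, hqgy, -⟩ := hmemS q hqF
    obtain ⟨-, -, -, -, hrgx, -, -⟩ := hmemS r hrF
    have hvne := v_ne_zero (a00 := A00) (a01 := A10) (a10 := A01) (a11 := A11)
      (x1 := q.2.1) (x2 := q.2.2) hD0' hqgy
    have h1 := hperp2 q hqF
    have h2 := hperp2 r hrF
    have hrq : r.2 = q.2 := by rw [hrb, ← hqb]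
    rw [hrq] at h2
    rcases perp_unique hvne hqgx hrgx h1 h2 with ⟨e1, e2⟩ | ⟨e1, e2⟩
    · have hrqq : r = q := by
        rw [Prod.ext_iff]
        exact ⟨by rw [Prod.ext_iff]; exact ⟨e1, e2⟩, hrq⟩
      rw [hrqq]
      exact Finset.mem_insert_self _ _
    · have hrqq : r = ((-q.1.1, -q.1.2), q.2) := by
        rw [Prod.ext_iff]
        exact ⟨by rw [Prod.ext_iff]; exact ⟨e1, e2⟩, hrq⟩
      rw [hrqq]
      exact Finset.mem_insert_of_mem (Finset.mem_singleton_self _)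
  have himg : (SF.image (fun p => p.2)) ⊆
      (Finset.Icc (-⌈Y₁⌉) ⌈Y₁⌉) ×ˢ (Finset.Icc (-⌈Y₂⌉) ⌈Y₂⌉) := by
    intro b hb
    obtain ⟨q, hqF, hqb⟩ := Finset.mem_image.mp hb
    obtain ⟨-, -, h3, h4, -⟩ := hmemS q hqF
    rw [← hqb, Finset.mem_product]
    exact ⟨mem_Icc_of_abs h3, mem_Icc_of_abs h4⟩
  have hcard2 : ((SF.image (fun p => p.2)).card : ℝ) ≤ 25 * (Y₁ * Y₂) := by
    have hle := Finset.card_le_card himg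
    rw [Finset.card_product] at hle
    calc ((SF.image (fun p => p.2)).card : ℝ)
        ≤ ((Finset.Icc (-⌈Y₁⌉) ⌈Y₁⌉).card : ℝ) * ((Finset.Icc (-⌈Y₂⌉) ⌈Y₂⌉).card : ℝ) := by
          exact_mod_cast hle
      _ ≤ (5 * Y₁) * (5 * Y₂) :=
          mul_le_mul (box_card_le hY₁) (box_card_le hY₂) (by positivity) (by positivity)
      _ = 25 * (Y₁ * Y₂) := by ring
  calc (SF.card : ℝ) ≤ 2 * ((SF.image (fun p => p.2)).card : ℝ) := by exact_mod_cast key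
    _ ≤ 2 * (25 * (Y₁ * Y₂)) := by linarith
    _ = 50 * (Y₁ * Y₂) := by ring


/-- There is an absolute constant `C > 0` such that for every 2×2 integer
matrix `a` with coprime entries and nonzero determinant `Δ`, and all `X₁,X₂,Y₁,Y₂ ≥ 1`,
the number of pairs of primitive integer vectors `(x,y)` in the box with `xᵀay = 0` is
at most `C · min{X₁X₂, Y₁Y₂, d(|Δ|)(√(X₁X₂Y₁Y₂/|Δ|) + 1)}`. -/
theorem stmt_1 : ∃ C : ℝ, 0 < C ∧
    ∀ (a : Matrix (Fin 2) (Fin 2) ℤ),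
      Int.gcd (Int.gcd (a 0 0) (a 1 0)) (Int.gcd (a 0 1) (a 1 1)) = 1 →
      a.det ≠ 0 →
      ∀ X₁ X₂ Y₁ Y₂ : ℝ, 1 ≤ X₁ → 1 ≤ X₂ → 1 ≤ Y₁ → 1 ≤ Y₂ →
      (Set.ncard {p : (ℤ × ℤ) × (ℤ × ℤ) |
          (|p.1.1| : ℝ) ≤ X₁ ∧ (|p.1.2| : ℝ) ≤ X₂ ∧
          (|p.2.1| : ℝ) ≤ Y₁ ∧ (|p.2.2| : ℝ) ≤ Y₂ ∧
          Int.gcd p.1.1 p.1.2 = 1 ∧ Int.gcd p.2.1 p.2.2 = 1 ∧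
          a 0 0 * p.1.1 * p.2.1 + a 0 1 * p.1.1 * p.2.2 +
            a 1 0 * p.1.2 * p.2.1 + a 1 1 * p.1.2 * p.2.2 = 0} : ℝ)
        ≤ C * min (X₁ * X₂) (min (Y₁ * Y₂)
            ((a.det.natAbs.divisors.card : ℝ) *
              (Real.sqrt (X₁ * X₂ * Y₁ * Y₂ / |(a.det : ℝ)|) + 1))) := by
  classical
  refine ⟨50, by norm_num, ?_⟩
  intro a hcont hdet X₁ X₂ Y₁ Y₂ hX₁ hX₂ hY₁ hY₂
  have hD : a.det = a 0 0 * a 1 1 - a 0 1 * a 1 0 := Matrix.det_fin_two a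
  rw [hD]
  have hD0 : a 0 0 * a 1 1 - a 0 1 * a 1 0 ≠ 0 := hD ▸ hdet
  have hfin : {p : (ℤ × ℤ) × (ℤ × ℤ) |
      (|p.1.1| : ℝ) ≤ X₁ ∧ (|p.1.2| : ℝ) ≤ X₂ ∧
      (|p.2.1| : ℝ) ≤ Y₁ ∧ (|p.2.2| : ℝ) ≤ Y₂ ∧
      Int.gcd p.1.1 p.1.2 = 1 ∧ Int.gcd p.2.1 p.2.2 = 1 ∧
      a 0 0 * p.1.1 * p.2.1 + a 0 1 * p.1.1 * p.2.2 +
        a 1 0 * p.1.2 * p.2.1 + a 1 1 * p.1.2 * p.2.2 = 0}.Finite := by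
    apply Set.Finite.subset ((((Finset.Icc (-⌈X₁⌉) ⌈X₁⌉) ×ˢ (Finset.Icc (-⌈X₂⌉) ⌈X₂⌉)) ×ˢ
      ((Finset.Icc (-⌈Y₁⌉) ⌈Y₁⌉) ×ˢ (Finset.Icc (-⌈Y₂⌉) ⌈Y₂⌉))).finite_toSet)
    intro p hp
    obtain ⟨h1, h2, h3, h4, -⟩ := hp
    rw [Finset.mem_coe, Finset.mem_product, Finset.mem_product, Finset.mem_product]
    exact ⟨⟨mem_Icc_of_abs (by rwa [Int.cast_abs]), mem_Icc_of_abs (by rwa [Int.cast_abs])⟩,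
      mem_Icc_of_abs (by rwa [Int.cast_abs]), mem_Icc_of_abs (by rwa [Int.cast_abs])⟩
  rw [Set.ncard_eq_toFinset_card _ hfin]
  have hmemS : ∀ p ∈ hfin.toFinset, ((|p.1.1| : ℤ) : ℝ) ≤ X₁ ∧ ((|p.1.2| : ℤ) : ℝ) ≤ X₂ ∧
      ((|p.2.1| : ℤ) : ℝ) ≤ Y₁ ∧ ((|p.2.2| : ℤ) : ℝ) ≤ Y₂ ∧
      Int.gcd p.1.1 p.1.2 = 1 ∧ Int.gcd p.2.1 p.2.2 = 1 ∧
      a 0 0 * p.1.1 * p.2.1 + a 0 1 * p.1.1 * p.2.2 +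
        a 1 0 * p.1.2 * p.2.1 + a 1 1 * p.1.2 * p.2.2 = 0 := by
    intro p hp
    rw [Set.Finite.mem_toFinset] at hp
    obtain ⟨h1, h2, h3, h4, h5, h6, h7⟩ := hp
    exact ⟨by rwa [Int.cast_abs], by rwa [Int.cast_abs], by rwa [Int.cast_abs],
      by rwa [Int.cast_abs], h5, h6, h7⟩
  have Hx := boundX rfl hD0 hX₁ hX₂ hfin.toFinset hmemS
  have Hy := boundY rfl hD0 hY₁ hY₂ hfin.toFinset hmemS
  have Hd := boundD hcont rfl hD0 hX₁ hX₂ hY₁ hY₂ hfin.toFinset hmemS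
  rcases le_total (X₁ * X₂) (min (Y₁ * Y₂)
      (((a 0 0 * a 1 1 - a 0 1 * a 1 0).natAbs.divisors.card : ℝ) *
        (Real.sqrt (X₁ * X₂ * Y₁ * Y₂ / |((a 0 0 * a 1 1 - a 0 1 * a 1 0 : ℤ) : ℝ)|) + 1)))
      with h | h
  · rw [min_eq_left h]; exact Hx
  · rw [min_eq_right h]
    rcases le_total (Y₁ * Y₂)
        (((a 0 0 * a 1 1 - a 0 1 * a 1 0).natAbs.divisors.card : ℝ) *
          (Real.sqrt (X₁ * X₂ * Y₁ * Y₂ / |((a 0 0 * a 1 1 - a 0 1 * a 1 0 : ℤ) : ℝ)|) + 1))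
        with h2 | h2
    · rw [min_eq_left h2]; exact Hy
    · rw [min_eq_right h2]; exact Hd
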